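/- Let k be a real number with 3/2 ≤ k ≤ 2. Let v_{i-1}, v_i, v_{i+1} be real numbers with b = v_{i+1} - v_i ≠ 0 and r = (v_i - v_{i-1})/b. Define the weight ω = 1/3 + (2/3)·(1 - min(k|r|, max(1, 3|r|/(2|r|+k)))). Then P(ω) = ω·(3v_i - v_{i-1})/2 + (1-ω)·(v_i + v_{i+1})/2 satisfies min(v_{i-1}, v_i, v_{i+1}) ≤ P(ω) ≤ max(v_{i-1}, v_i, v_{i+1}). -/
import Mathlib
set_option maxHeartbeats 1000000


theorem stmt_10 (k : ℝ) (hk1 : 3/2 ≤ k) (hk2 : k ≤ 2)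
    (vm v vp : ℝ) (hb : vp - v ≠ 0)
    (r : ℝ) (hr : r = (v - vm) / (vp - v))
    (ω : ℝ)
    (hω : ω = 1/3 + (2/3) * (1 - min (k * |r|) (max 1 (3 * |r| / (2 * |r| + k))))) :
    min (min vm v) vp ≤ ω * (3 * v - vm) / 2 + (1 - ω) * (v + vp) / 2 ∧
      ω * (3 * v - vm) / 2 + (1 - ω) * (v + vp) / 2 ≤ max (max vm v) vp := by
  set s := |r| with hs
  have hs0 : 0 ≤ s := abs_nonneg r
  have hd : 0 < 2 * s + k := by linarith
  set X := 3 * s / (2 * s + k) with hXdef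
  set m := min (k * s) (max 1 X) with hm
  have hXd : X * (2 * s + k) = 3 * s := by
    rw [hXdef]; field_simp
  have hX32 : X ≤ 3 / 2 := by
    rw [hXdef, div_le_iff₀ hd]; nlinarith
  have hm32 : m ≤ 3 / 2 := le_trans (min_le_right _ _) (max_le (by norm_num) hX32)
  have hm0 : 0 ≤ m :=
    le_min (mul_nonneg (by linarith) hs0) (le_trans zero_le_one (le_max_left _ _))
  have hmX : min (k * s) X ≤ m :=
    le_min (min_le_left _ _) (le_trans (min_le_right _ _) (le_max_right _ _))
  set c := ω * r + (1 - ω) with hcdef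
  have hc : c = r + (2/3) * m * (1 - r) := by rw [hcdef, hω]; ring
  -- key bounds on c
  have hc0 : 0 ≤ c := by
    rcases le_or_gt 0 r with h0 | h0
    · -- r ≥ 0, s = r
      have hsr : s = r := abs_of_nonneg h0
      rcases le_or_gt r 1 with h1 | h1
      · nlinarith [mul_nonneg hm0 (by linarith : (0:ℝ) ≤ 1 - r)]
      · nlinarith [mul_nonneg (by linarith : (0:ℝ) ≤ 3/2 - m) (by linarith : (0:ℝ) ≤ r - 1)]
    · -- r < 0, s = -r
      have hsr : s = -r := abs_of_neg h0
      rcases min_le_iff.mp (le_refl (min (k * s) X)) with _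
      rcases le_total (k * s) X with hks | hks
      · have h1 : k * s ≤ m := by
          rw [min_eq_left hks] at hmX; exact hmX
        nlinarith [mul_nonneg (mul_nonneg (by linarith : (0:ℝ) ≤ k) hs0) hs0]
      · have h1 : X ≤ m := by
          rw [min_eq_right hks] at hmX; exact hmX
        have key : 0 ≤ r + (2/3) * X * (1 - r) := by
          rw [hsr] at hXd
          nlinarith [hd, hXd]
        nlinarith [mul_nonneg (by linarith : (0:ℝ) ≤ m - X) (by linarith : (0:ℝ) ≤ 1 - r)]
  have hc2 : c ≤ 2 := by
    rcases le_or_gt 0 r with h0 | h0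
    · have hsr : s = r := abs_of_nonneg h0
      rcases le_or_gt r 1 with h1 | h1
      · -- X ≤ 1 here
        have hX1 : X ≤ 1 := by
          rw [hXdef, div_le_one hd]; linarith
        have hm1 : m ≤ 1 := le_trans (min_le_right _ _) (max_le le_rfl hX1)
        nlinarith [mul_nonneg (by linarith : (0:ℝ) ≤ m) (by linarith : (0:ℝ) ≤ 1 - r)]
      · -- r > 1 : m ≥ X
        have hkX : X ≤ k * s := by
          rw [hXdef, div_le_iff₀ hd]
          have h3 : (3:ℝ) ≤ k * (2 * s + k) := by
            nlinarith [mul_nonneg (by linarith : (0:ℝ) ≤ k - 3/2) (by linarith : (0:ℝ) ≤ s - 1)]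
          nlinarith [mul_nonneg hs0 (by linarith : (0:ℝ) ≤ k * (2 * s + k) - 3)]
        have h1 : X ≤ m := by
          rw [min_eq_right hkX] at hmX; exact hmX
        have key : r + (2/3) * X * (1 - r) ≤ 2 := by
          rw [hsr] at hXd
          nlinarith [hd, hXd]
        nlinarith [mul_nonneg (by linarith : (0:ℝ) ≤ m - X) (by linarith : (0:ℝ) ≤ r - 1)]
    · have hsr : s = -r := abs_of_neg h0
      nlinarith [mul_nonneg (by linarith : (0:ℝ) ≤ 3/2 - m) (by linarith : (0:ℝ) ≤ 1 - r)]
  -- express P in terms of c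
  have hvm : vm = v - r * (vp - v) := by
    have : r * (vp - v) = v - vm := by
      rw [hr]; field_simp
    linarith
  have hP : ω * (3 * v - vm) / 2 + (1 - ω) * (v + vp) / 2
      = v + (c / 2) * (vp - v) := by
    rw [hvm, hcdef]; ring
  rw [hP]
  have hminv : min (min vm v) vp ≤ v := le_trans (min_le_left _ _) (min_le_right _ _)
  have hminvp : min (min vm v) vp ≤ vp := min_le_right _ _
  have hmaxv : v ≤ max (max vm v) vp := le_trans (le_max_right _ _) (le_max_left _ _)
  have hmaxvp : vp ≤ max (max vm v) vp := le_max_right _ _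
  rcases hb.lt_or_gt with h | h
  · constructor
    · nlinarith [mul_nonneg (by linarith : (0:ℝ) ≤ 2 - c) (by linarith : (0:ℝ) ≤ v - vp)]
    · nlinarith [mul_nonneg hc0 (by linarith : (0:ℝ) ≤ v - vp)]
  · constructor
    · nlinarith [mul_nonneg hc0 (by linarith : (0:ℝ) ≤ vp - v)]
    · nlinarith [mul_nonneg (by linarith : (0:ℝ) ≤ 2 - c) (by linarith : (0:ℝ) ≤ vp - v)]
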